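/- Fix 0 < q < 1. For λ = (λ_1 ≥ ⋯ ≥ λ_l ≥ 0) ∈ ℤ^l, parameters t_0 t_1 t_2 t_3 ∈ [-q, 1), t = q^k, the eigenvalue E^K_λ := ∑_{j=1}^l ( q^{-1} t_0 t_1 t_2 t_3 t^{2l-j-1} (q^{λ_j} - 1) + t^{j-1}(q^{-λ_j} - 1) ) separates dominance-comparable weights: if λ, μ ∈ P_Σ^+ with λ < μ in the dominance order, then E^K_λ ≠ E^K_μ. -/
import Mathlib

noncomputable def kwPsi (q C : ℝ) (e : ℤ) : ℝ := q ^ (-e) + C * q ^ e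
noncomputable def kwW (q C : ℝ) (m : ℤ) : ℝ := kwPsi q C (m + 1) - kwPsi q C m

lemma kwW_eq (q C : ℝ) (hq : q ≠ 0) (m : ℤ) :
    kwW q C m = (1 - q) * (q ^ (-m - 1) - C * q ^ m) := by
  unfold kwW kwPsi
  have h1 : (-(m + 1)) = (-m - 1) := by ring
  have h2 : (-m) = (-m - 1) + 1 := by ring
  rw [h1, h2, zpow_add_one₀ hq, zpow_add_one₀ hq]
  ring

lemma kwW_pos (q C : ℝ) (hq0 : 0 < q) (hq1 : q < 1) (N : ℤ)
    (hC : C < q ^ (2 * N - 1)) (m : ℤ) (hm : -N ≤ m) : 0 < kwW q C m := by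
  rw [kwW_eq q C (ne_of_gt hq0) m]
  have h1 : C * q ^ m < q ^ (2 * N - 1) * q ^ m :=
    mul_lt_mul_of_pos_right hC (zpow_pos hq0 m)
  have h2 : q ^ (2 * N - 1) * q ^ m = q ^ (2 * N - 1 + m) := (zpow_add₀ (ne_of_gt hq0) _ _).symm
  have h3 : q ^ (2 * N - 1 + m) ≤ q ^ (N - 1) :=
    zpow_le_zpow_right_of_le_one₀ hq0 hq1.le (by linarith)
  have h4 : q ^ (N - 1) ≤ q ^ (-m - 1) :=
    zpow_le_zpow_right_of_le_one₀ hq0 hq1.le (by linarith)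
  nlinarith

lemma kwW_lt (q C : ℝ) (hq0 : 0 < q) (hq1 : q < 1) (N : ℤ)
    (hC2 : -q ^ (2 * N) ≤ C) (m₁ m₂ : ℤ) (hm : -N ≤ m₁) (hlt : m₁ < m₂) :
    kwW q C m₁ < kwW q C m₂ := by
  have hq : q ≠ 0 := ne_of_gt hq0
  have e1 : q ^ (m₂ - m₁) * q ^ (-m₂ - 1) = q ^ (-m₁ - 1) := by
    rw [← zpow_add₀ hq]; congr 1; ring
  have e2 : q ^ (m₂ - m₁) * q ^ m₁ = q ^ m₂ := by
    rw [← zpow_add₀ hq]; congr 1; ring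
  have key : kwW q C m₂ - kwW q C m₁
      = (1 - q) * (1 - q ^ (m₂ - m₁)) * (q ^ (-m₂ - 1) + C * q ^ m₁) := by
    rw [kwW_eq q C hq m₁, kwW_eq q C hq m₂]
    linear_combination (1 - q) * e1 + (1 - q) * C * e2
  have f1 : q ^ (m₂ - m₁) < 1 := by
    have := zpow_lt_zpow_right_of_lt_one₀ hq0 hq1 (show (0:ℤ) < m₂ - m₁ by omega)
    simpa using this
  have f2 : 0 < q ^ (-m₂ - 1) + C * q ^ m₁ := by
    have g1 : -q ^ (2 * N) * q ^ m₁ ≤ C * q ^ m₁ :=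
      mul_le_mul_of_nonneg_right hC2 (zpow_pos hq0 m₁).le
    have g2 : q ^ (2 * N) * q ^ m₁ = q ^ (2 * N + m₁) := (zpow_add₀ hq _ _).symm
    have g3 : q ^ (2 * N + m₁) ≤ q ^ N :=
      zpow_le_zpow_right_of_le_one₀ hq0 hq1.le (by linarith)
    have g4 : q ^ N < q ^ (N - 1) :=
      zpow_lt_zpow_right_of_lt_one₀ hq0 hq1 (by omega)
    have g5 : q ^ (N - 1) ≤ q ^ (-m₂ - 1) :=
      zpow_le_zpow_right_of_le_one₀ hq0 hq1.le (by omega)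
    nlinarith
  have f0 : (0:ℝ) < 1 - q := by linarith
  have := mul_pos (mul_pos f0 (by linarith : (0:ℝ) < 1 - q ^ (m₂ - m₁))) f2
  linarith

lemma kwW_le (q C : ℝ) (hq0 : 0 < q) (hq1 : q < 1) (N : ℤ)
    (hC2 : -q ^ (2 * N) ≤ C) (m₁ m₂ : ℤ) (hm : -N ≤ m₁) (hle : m₁ ≤ m₂) :
    kwW q C m₁ ≤ kwW q C m₂ := by
  rcases eq_or_lt_of_le hle with h | h
  · rw [h]
  · exact (kwW_lt q C hq0 hq1 N hC2 m₁ m₂ hm h).le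

lemma kwPsi_tel (q C : ℝ) (a : ℤ) (n : ℕ) :
    kwPsi q C (a + n) - kwPsi q C a = ∑ i ∈ Finset.range n, kwW q C (a + i) := by
  induction n with
  | zero => simp
  | succ n ih =>
    rw [Finset.sum_range_succ, ← ih]
    have h : (a + ((n : ℕ) + 1 : ℕ) : ℤ) = (a + (n : ℤ)) + 1 := by push_cast; ring
    rw [h]
    unfold kwW
    ring

lemma kwPsi_lower (q C : ℝ) (hq0 : 0 < q) (hq1 : q < 1) (N : ℤ)
    (hC2 : -q ^ (2 * N) ≤ C) (a b : ℤ) (ha : -N ≤ a) (hab : a ≤ b) :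
    ((b - a : ℤ) : ℝ) * kwW q C a ≤ kwPsi q C b - kwPsi q C a := by
  have hb : b = a + ((b - a).toNat : ℤ) := by omega
  have tel := kwPsi_tel q C a (b - a).toNat
  rw [← hb] at tel
  rw [tel]
  have h1 : ∀ i ∈ Finset.range (b - a).toNat, kwW q C a ≤ kwW q C (a + i) := by
    intro i _
    exact kwW_le q C hq0 hq1 N hC2 a (a + i) ha (by omega)
  have h2 := Finset.sum_le_sum h1
  rw [Finset.sum_const, Finset.card_range] at h2
  have h3 : ((b - a : ℤ) : ℝ) * kwW q C a = ((b - a).toNat : ℕ) • kwW q C a := by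
    rw [nsmul_eq_mul]
    congr 1
    have h : ((b - a).toNat : ℤ) = b - a := by omega
    exact_mod_cast h.symm
  rw [h3]
  exact h2

lemma kwPsi_upper (q C : ℝ) (hq0 : 0 < q) (hq1 : q < 1) (N : ℤ)
    (hC2 : -q ^ (2 * N) ≤ C) (a b : ℤ) (ha : -N ≤ a) (hab : a ≤ b) :
    kwPsi q C b - kwPsi q C a ≤ ((b - a : ℤ) : ℝ) * kwW q C (b - 1) := by
  have hb : b = a + ((b - a).toNat : ℤ) := by omega
  have tel := kwPsi_tel q C a (b - a).toNat
  rw [← hb] at tel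
  rw [tel]
  have h1 : ∀ i ∈ Finset.range (b - a).toNat, kwW q C (a + i) ≤ kwW q C (b - 1) := by
    intro i hi
    simp only [Finset.mem_range] at hi
    exact kwW_le q C hq0 hq1 N hC2 (a + i) (b - 1) (by omega) (by omega)
  have h2 := Finset.sum_le_sum h1
  rw [Finset.sum_const, Finset.card_range] at h2
  have h3 : ((b - a : ℤ) : ℝ) * kwW q C (b - 1) = ((b - a).toNat : ℕ) • kwW q C (b - 1) := by
    rw [nsmul_eq_mul]
    congr 1
    have h : ((b - a).toNat : ℤ) = b - a := by omega
    exact_mod_cast h.symm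
  rw [h3]
  exact h2

lemma abel_nonneg : ∀ (n : ℕ) (c d : ℕ → ℝ),
    (∀ i j, i ≤ j → j < n → c j ≤ c i) → (∀ j, j < n → 0 ≤ c j) →
    (∀ j, j < n → 0 ≤ ∑ i ∈ Finset.range (j + 1), d i) →
    0 ≤ ∑ j ∈ Finset.range n, c j * d j := by
  intro n
  induction n with
  | zero => intro c d _ _ _; simp
  | succ n ih =>
    intro c d hmono hpos hpre
    have key : ∑ j ∈ Finset.range (n + 1), c j * d j
        = (∑ j ∈ Finset.range n, (c j - c n) * d j)
          + c n * ∑ i ∈ Finset.range (n + 1), d i := by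
      simp only [Finset.sum_range_succ, sub_mul, Finset.sum_sub_distrib, Finset.mul_sum,
        mul_add]
      ring
    have h1 : 0 ≤ ∑ j ∈ Finset.range n, (c j - c n) * d j := by
      apply ih
      · intro i j hij hj
        have := hmono i j hij (by omega); linarith
      · intro j hj
        have := hmono j n (by omega) (by omega); linarith
      · intro j hj
        exact hpre j (by omega)
    have h2 : 0 ≤ c n := hpos n (by omega)
    have h3 : 0 ≤ ∑ i ∈ Finset.range (n + 1), d i := hpre n (by omega)
    rw [key]
    have := mul_nonneg h2 h3
    linarith

lemma filter_sum_eq (l : ℕ) (f : Fin l → ℤ) (j : ℕ) (hj : j ≤ l) :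
    ∑ i ∈ Finset.univ.filter (fun i : Fin l => (i : ℕ) < j), f i
      = ∑ m ∈ Finset.range j, (if h : m < l then f ⟨m, h⟩ else 0) := by
  rw [Finset.sum_filter]
  have step1 : ∑ i : Fin l, (if (i : ℕ) < j then f i else 0)
      = ∑ i : Fin l,
        (fun m => if m < j then (if h : m < l then f ⟨m, h⟩ else 0) else 0) ((i : ℕ)) := by
    apply Finset.sum_congr rfl
    intro i _
    simp [i.isLt]
  have step2 := Fin.sum_univ_eq_sum_range
    (fun m => if m < j then (if h : m < l then f ⟨m, h⟩ else 0) else 0) l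
  rw [step1, step2]
  rw [← Finset.sum_filter]
  congr 1
  ext m
  simp only [Finset.mem_filter, Finset.mem_range]
  omega

/-- The Koornwinder eigenvalues
`E^K_λ = ∑_{j=1}^l ( q⁻¹ t₀t₁t₂t₃ t^{2l-j-1}(q^{λ_j} - 1) + t^{j-1}(q^{-λ_j} - 1) )`
with `t = q^k` and `t₀t₁t₂t₃ = p ∈ [-q, 1)` separate dominance-comparable dominant
weights: if `λ < μ` in the dominance order then `E^K_λ ≠ E^K_μ`. -/
theorem koornwinder_eigenvalue_separation (q : ℝ) (hq0 : 0 < q) (hq1 : q < 1)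
    (l k : ℕ) (hl : 1 ≤ l) (hk : 1 ≤ k) (p : ℝ) (hp : p ∈ Set.Ico (-q) 1)
    (lam mu : Fin l → ℤ)
    (hlam : (∀ i j : Fin l, i ≤ j → lam j ≤ lam i) ∧ ∀ i, 0 ≤ lam i)
    (hmu : (∀ i j : Fin l, i ≤ j → mu j ≤ mu i) ∧ ∀ i, 0 ≤ mu i)
    (hlt : (∀ j : ℕ, 1 ≤ j → j ≤ l →
        ∑ i ∈ Finset.univ.filter (fun i : Fin l => (i : ℕ) < j), lam i ≤
        ∑ i ∈ Finset.univ.filter (fun i : Fin l => (i : ℕ) < j), mu i) ∧ lam ≠ mu) :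
    (∑ i : Fin l,
        (q⁻¹ * p * (q ^ k) ^ (2 * l - (i : ℕ) - 2) * (q ^ (lam i) - 1) +
          (q ^ k) ^ ((i : ℕ)) * (q ^ (-lam i) - 1))) ≠
    (∑ i : Fin l,
        (q⁻¹ * p * (q ^ k) ^ (2 * l - (i : ℕ) - 2) * (q ^ (mu i) - 1) +
          (q ^ k) ^ ((i : ℕ)) * (q ^ (-mu i) - 1))) := by
  obtain ⟨hdom, hne⟩ := hlt
  obtain ⟨hlam_mono, hlam_nn⟩ := hlam
  obtain ⟨hmu_mono, hmu_nn⟩ := hmu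
  obtain ⟨hp1, hp2⟩ := hp
  have hq : q ≠ 0 := ne_of_gt hq0
  set N : ℤ := ((l : ℤ) - 1) * k with hNdef
  have hN0 : 0 ≤ N := by
    apply mul_nonneg
    · have : (1 : ℤ) ≤ (l : ℤ) := by exact_mod_cast hl
      linarith
    · positivity
  set C : ℝ := p * q ^ (2 * N - 1) with hCdef
  have hq2N1 : (0:ℝ) < q ^ (2 * N - 1) := zpow_pos hq0 _
  have hCub : C < q ^ (2 * N - 1) := by nlinarith
  have hClb : -q ^ (2 * N) ≤ C := by
    have h : q ^ (2 * N) = q ^ (2 * N - 1) * q := by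
      rw [← zpow_add_one₀ hq]; congr 1; ring
    nlinarith
  -- ℕ-indexed data
  set Λ : ℕ → ℤ := fun j => if h : j < l then lam ⟨j, h⟩ else 0 with hΛ
  set M : ℕ → ℤ := fun j => if h : j < l then mu ⟨j, h⟩ else 0 with hM
  set X : ℕ → ℤ := fun j => Λ j - (j : ℤ) * k with hXdef
  set Y : ℕ → ℤ := fun j => M j - (j : ℤ) * k with hYdef
  have hXN : ∀ j, j < l → -N ≤ X j := by
    intro j hj
    have h1 : 0 ≤ Λ j := by simp only [hΛ, dif_pos hj]; exact hlam_nn _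
    have h2 : (j : ℤ) * k ≤ N := by
      rw [hNdef]
      apply mul_le_mul_of_nonneg_right _ (by positivity)
      omega
    simp only [hXdef]; omega
  have hYN : ∀ j, j < l → -N ≤ Y j := by
    intro j hj
    have h1 : 0 ≤ M j := by simp only [hM, dif_pos hj]; exact hmu_nn _
    have h2 : (j : ℤ) * k ≤ N := by
      rw [hNdef]
      apply mul_le_mul_of_nonneg_right _ (by positivity)
      omega
    simp only [hYdef]; omega
  have hXanti : ∀ i j : ℕ, i ≤ j → j < l → X j ≤ X i := by
    intro i j hij hj
    have hi : i < l := by omega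
    have h1 : Λ j ≤ Λ i := by
      simp only [hΛ, dif_pos hi, dif_pos hj]
      exact hlam_mono ⟨i, hi⟩ ⟨j, hj⟩ hij
    have h2 : (i : ℤ) * k ≤ (j : ℤ) * k := by
      apply mul_le_mul_of_nonneg_right _ (by positivity)
      omega
    simp only [hXdef]; omega
  -- per-term identity
  have hterm : ∀ (i : Fin l) (ν : ℤ),
      q⁻¹ * p * (q ^ k) ^ (2 * l - (i : ℕ) - 2) * (q ^ ν - 1)
          + (q ^ k) ^ ((i : ℕ)) * (q ^ (-ν) - 1)
        = kwPsi q C (ν - (i : ℤ) * k)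
          - ((q ^ k) ^ ((i : ℕ)) + q⁻¹ * p * (q ^ k) ^ (2 * l - (i : ℕ) - 2)) := by
    intro i ν
    have hil : (i : ℕ) < l := i.isLt
    have eA : (q ^ k) ^ ((i : ℕ)) * q ^ (-ν) = q ^ (-(ν - (i : ℤ) * k)) := by
      rw [← pow_mul, ← zpow_natCast q (k * (i : ℕ)), ← zpow_add₀ hq]
      congr 1
      push_cast
      ring
    have h0 : ((2 * l - (i : ℕ) - 2 : ℕ) : ℤ) = 2 * (l : ℤ) - (i : ℤ) - 2 := by omega
    have eB : q⁻¹ * p * (q ^ k) ^ (2 * l - (i : ℕ) - 2) * q ^ ν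
        = C * q ^ (ν - (i : ℤ) * k) := by
      have h2 : (q ^ k) ^ (2 * l - (i : ℕ) - 2)
          = q ^ ((k : ℤ) * (2 * (l : ℤ) - (i : ℤ) - 2)) := by
        rw [← pow_mul, ← zpow_natCast q (k * (2 * l - (i : ℕ) - 2))]
        congr 1
        push_cast [h0]
        ring
      rw [h2, hCdef, show q⁻¹ = q ^ (-1 : ℤ) from (zpow_neg_one q).symm]
      have lhs_eq : q ^ (-1 : ℤ) * p * q ^ ((k : ℤ) * (2 * (l : ℤ) - (i : ℤ) - 2)) * q ^ ν
          = p * q ^ ((-1) + ((k : ℤ) * (2 * (l : ℤ) - (i : ℤ) - 2) + ν)) := by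
        rw [zpow_add₀ hq, zpow_add₀ hq]; ring
      rw [lhs_eq, mul_assoc, ← zpow_add₀ hq]
      congr 2
      rw [hNdef]
      ring
    simp only [kwPsi]
    linear_combination eA + eB
  -- sum difference
  have hdiff : (∑ i : Fin l,
        (q⁻¹ * p * (q ^ k) ^ (2 * l - (i : ℕ) - 2) * (q ^ (mu i) - 1) +
          (q ^ k) ^ ((i : ℕ)) * (q ^ (-mu i) - 1)))
      - (∑ i : Fin l,
        (q⁻¹ * p * (q ^ k) ^ (2 * l - (i : ℕ) - 2) * (q ^ (lam i) - 1) +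
          (q ^ k) ^ ((i : ℕ)) * (q ^ (-lam i) - 1)))
      = ∑ j ∈ Finset.range l, (kwPsi q C (Y j) - kwPsi q C (X j)) := by
    rw [← Finset.sum_sub_distrib]
    rw [← Fin.sum_univ_eq_sum_range (fun j => kwPsi q C (Y j) - kwPsi q C (X j)) l]
    apply Finset.sum_congr rfl
    intro i _
    rw [hterm i (mu i), hterm i (lam i)]
    have hYi : Y ((i : ℕ)) = mu i - (i : ℤ) * k := by
      simp only [hYdef, hM, dif_pos i.isLt]
    have hXi : X ((i : ℕ)) = lam i - (i : ℤ) * k := by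
      simp only [hXdef, hΛ, dif_pos i.isLt]
    rw [hYi, hXi]
    ring
  -- weights
  set c : ℕ → ℝ := fun j => kwW q C (X j) with hc
  set d : ℕ → ℝ := fun j => ((Y j - X j : ℤ) : ℝ) with hd
  have hcpos : ∀ j, j < l → 0 < c j := fun j hj =>
    kwW_pos q C hq0 hq1 N hCub (X j) (hXN j hj)
  have hcanti : ∀ i j : ℕ, i ≤ j → j < l → c j ≤ c i := fun i j hij hj =>
    kwW_le q C hq0 hq1 N hClb (X j) (X i) (hXN j hj) (hXanti i j hij hj)
  have hpre : ∀ j, j < l → 0 ≤ ∑ i ∈ Finset.range (j + 1), d i := by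
    intro j hj
    have h1 := hdom (j + 1) (by omega) (by omega)
    rw [filter_sum_eq l lam (j + 1) (by omega), filter_sum_eq l mu (j + 1) (by omega)] at h1
    have h2 : ∑ i ∈ Finset.range (j + 1), d i
        = ((∑ m ∈ Finset.range (j + 1), (M m - Λ m) : ℤ) : ℝ) := by
      push_cast
      apply Finset.sum_congr rfl
      intro m _
      simp only [hd, hYdef, hXdef]
      push_cast
      ring
    rw [h2]
    have h3 : (0 : ℤ) ≤ ∑ m ∈ Finset.range (j + 1), (M m - Λ m) := by
      rw [Finset.sum_sub_distrib]
      simp only [hM, hΛ]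
      omega
    exact_mod_cast h3
  -- per-term bounds
  have hpt : ∀ j ∈ Finset.range l, c j * d j ≤ kwPsi q C (Y j) - kwPsi q C (X j) := by
    intro j hj
    simp only [Finset.mem_range] at hj
    rcases le_or_gt (X j) (Y j) with h | h
    · have := kwPsi_lower q C hq0 hq1 N hClb (X j) (Y j) (hXN j hj) h
      simp only [hc, hd]
      linarith [this]
    · have hup := kwPsi_upper q C hq0 hq1 N hClb (Y j) (X j) (hYN j hj) h.le
      have hw := kwW_lt q C hq0 hq1 N hClb (X j - 1) (X j) (by have := hYN j hj; omega)
        (by omega)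
      have hd0 : (0 : ℝ) < ((X j - Y j : ℤ) : ℝ) := by exact_mod_cast (by omega : (0:ℤ) < X j - Y j)
      have h5 : ((X j - Y j : ℤ) : ℝ) * kwW q C (X j - 1)
          < ((X j - Y j : ℤ) : ℝ) * kwW q C (X j) := by
        exact mul_lt_mul_of_pos_left hw hd0
      simp only [hc, hd]
      have hcast : ((Y j - X j : ℤ) : ℝ) = -((X j - Y j : ℤ) : ℝ) := by push_cast; ring
      rw [hcast]
      nlinarith [hup, h5]
  have hpt_strict : ∀ j, j < l → Y j < X j →
      c j * d j < kwPsi q C (Y j) - kwPsi q C (X j) := by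
    intro j hj h
    have hup := kwPsi_upper q C hq0 hq1 N hClb (Y j) (X j) (hYN j hj) h.le
    have hw := kwW_lt q C hq0 hq1 N hClb (X j - 1) (X j) (by have := hYN j hj; omega)
      (by omega)
    have hd0 : (0 : ℝ) < ((X j - Y j : ℤ) : ℝ) := by exact_mod_cast (by omega : (0:ℤ) < X j - Y j)
    have h5 : ((X j - Y j : ℤ) : ℝ) * kwW q C (X j - 1)
        < ((X j - Y j : ℤ) : ℝ) * kwW q C (X j) := mul_lt_mul_of_pos_left hw hd0
    simp only [hc, hd]
    have hcast : ((Y j - X j : ℤ) : ℝ) = -((X j - Y j : ℤ) : ℝ) := by push_cast; ring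
    rw [hcast]
    nlinarith [hup, h5]
  have habel : 0 ≤ ∑ j ∈ Finset.range l, c j * d j :=
    abel_nonneg l c d hcanti (fun j hj => (hcpos j hj).le) hpre
  -- main inequality
  have hmain : 0 < ∑ j ∈ Finset.range l, (kwPsi q C (Y j) - kwPsi q C (X j)) := by
    by_cases hcase : ∃ j ∈ Finset.range l, Y j < X j
    · obtain ⟨j₀, hj₀, hYX⟩ := hcase
      have hsum_lt : ∑ j ∈ Finset.range l, c j * d j
          < ∑ j ∈ Finset.range l, (kwPsi q C (Y j) - kwPsi q C (X j)) := by
        apply Finset.sum_lt_sum hpt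
        exact ⟨j₀, hj₀, hpt_strict j₀ (Finset.mem_range.mp hj₀) hYX⟩
      linarith
    · push_neg at hcase
      obtain ⟨i₀, hne₀⟩ : ∃ i : Fin l, lam i ≠ mu i := by
        by_contra h
        push_neg at h
        exact hne (funext h)
      have hXYi : X ((i₀ : ℕ)) < Y ((i₀ : ℕ)) := by
        have hXl : X ((i₀ : ℕ)) = lam i₀ - (i₀ : ℤ) * k := by
          simp only [hXdef, hΛ, dif_pos i₀.isLt, Fin.eta]
        have hYl : Y ((i₀ : ℕ)) = mu i₀ - (i₀ : ℤ) * k := by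
          simp only [hYdef, hM, dif_pos i₀.isLt, Fin.eta]
        have h1 := hcase ((i₀ : ℕ)) (Finset.mem_range.mpr i₀.isLt)
        omega
      have hsum_pos : 0 < ∑ j ∈ Finset.range l, c j * d j := by
        apply Finset.sum_pos'
        · intro j hj
          simp only [Finset.mem_range] at hj
          have h1 := hcase j (Finset.mem_range.mpr hj)
          have h2 : (0 : ℝ) ≤ d j := by
            simp only [hd]
            exact_mod_cast (by omega : (0:ℤ) ≤ Y j - X j)
          exact mul_nonneg (hcpos j hj).le h2
        · refine ⟨(i₀ : ℕ), Finset.mem_range.mpr i₀.isLt, ?_⟩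
          apply mul_pos (hcpos _ i₀.isLt)
          simp only [hd]
          exact_mod_cast (by omega : (0:ℤ) < Y ((i₀:ℕ)) - X ((i₀:ℕ)))
      have hsum_le : ∑ j ∈ Finset.range l, c j * d j
          ≤ ∑ j ∈ Finset.range l, (kwPsi q C (Y j) - kwPsi q C (X j)) :=
        Finset.sum_le_sum hpt
      linarith
  apply ne_of_lt
  linarith [hdiff, hmain]
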